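/- For every integer k with 1 ≤ k ≤ n, the element u_k = a^k + (a-1)bâ is a unit of the group ring 𝕂G, with inverse a^{-k} - a^{-k}(a-1)bâ. If moreover gcd(k,n) = 1, then u_k has order exactly n in U(𝕂G). -/

import Mathlib

private lemma supp_sum_subset {𝕂 : Type*} [CommRing 𝕂] {G : Type*} [Group G]
    {ι : Type*} (s : Finset ι) (f : ι → MonoidAlgebra 𝕂 G) (P : Set G)
    (h : ∀ i ∈ s, ↑(f i).coeff.support ⊆ P) : ↑(∑ i ∈ s, f i).coeff.support ⊆ P := by
  classical
  induction s using Finset.induction_on with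
  | empty => simp
  | insert _ _ hx ih =>
    rename_i x s
    rw [Finset.sum_insert hx]
    intro g hg
    have := Finsupp.support_add (g₁ := (f x).coeff) (g₂ := (∑ i ∈ s, f i).coeff) hg
    rcases Finset.mem_union.mp this with h1 | h2
    · exact h x (Finset.mem_insert_self _ _) h1
    · exact ih (fun i hi => h i (Finset.mem_insert_of_mem hi)) h2

theorem stmt_9 {𝕂 : Type*} [CommRing 𝕂] [IsDomain 𝕂]
    {G : Type*} [Group G] (a b : G) (n : ℕ) (hn : 2 ≤ n) (ha : orderOf a = n)
    (hA : ¬ (Subgroup.zpowers a).Normal)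
    (hb : b ∉ Subgroup.normalizer (Subgroup.zpowers a))
    (ahat : MonoidAlgebra 𝕂 G)
    (hahat : ahat = ∑ i ∈ Finset.range n, (MonoidAlgebra.of 𝕂 G a) ^ i)
    (k : ℕ) (hk1 : 1 ≤ k) (hkn : k ≤ n) :
    (MonoidAlgebra.of 𝕂 G a ^ k + (MonoidAlgebra.of 𝕂 G a - 1) * MonoidAlgebra.of 𝕂 G b * ahat) *
        (MonoidAlgebra.of 𝕂 G (a ^ (-(k : ℤ))) - MonoidAlgebra.of 𝕂 G (a ^ (-(k : ℤ))) * ((MonoidAlgebra.of 𝕂 G a - 1) * MonoidAlgebra.of 𝕂 G b * ahat)) = 1 ∧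
    (MonoidAlgebra.of 𝕂 G (a ^ (-(k : ℤ))) - MonoidAlgebra.of 𝕂 G (a ^ (-(k : ℤ))) * ((MonoidAlgebra.of 𝕂 G a - 1) * MonoidAlgebra.of 𝕂 G b * ahat)) *
        (MonoidAlgebra.of 𝕂 G a ^ k + (MonoidAlgebra.of 𝕂 G a - 1) * MonoidAlgebra.of 𝕂 G b * ahat) = 1 ∧
    (Nat.gcd k n = 1 →
      ∀ u : (MonoidAlgebra 𝕂 G)ˣ,
        (u : MonoidAlgebra 𝕂 G) = MonoidAlgebra.of 𝕂 G a ^ k + (MonoidAlgebra.of 𝕂 G a - 1) * MonoidAlgebra.of 𝕂 G b * ahat →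
        orderOf u = n) := by
  classical
  set A := MonoidAlgebra.of 𝕂 G a with hAdef
  set B := MonoidAlgebra.of 𝕂 G b with hBdef
  set Ai := MonoidAlgebra.of 𝕂 G (a ^ (-(k : ℤ))) with hAidef
  set N := (A - 1) * B * ahat with hNdef
  have hApow : ∀ m : ℕ, A ^ m = MonoidAlgebra.of 𝕂 G (a ^ m) := fun m => (map_pow _ _ _).symm
  have hAn : A ^ n = 1 := by
    rw [hApow, ← ha, pow_orderOf_eq_one, map_one]
  have hS1 : (A - 1) * ahat = 0 := by
    have h1 : (A - 1) * ahat = ∑ i ∈ Finset.range n, (A ^ (i + 1) - A ^ i) := by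
      rw [hahat, Finset.mul_sum]
      refine Finset.sum_congr rfl fun i _ => ?_
      rw [sub_mul, one_mul, ← pow_succ']
    rw [h1, Finset.sum_range_sub, hAn, pow_zero, sub_self]
  have hS2 : ahat * (A - 1) = 0 := by
    have h1 : ahat * (A - 1) = ∑ i ∈ Finset.range n, (A ^ (i + 1) - A ^ i) := by
      rw [hahat, Finset.sum_mul]
      refine Finset.sum_congr rfl fun i _ => ?_
      rw [mul_sub, mul_one, ← pow_succ]
    rw [h1, Finset.sum_range_sub, hAn, pow_zero, sub_self]
  have hSA : ahat * A = ahat := by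
    have := hS2; rwa [mul_sub, mul_one, sub_eq_zero] at this
  have hSAk : ∀ m : ℕ, ahat * A ^ m = ahat := by
    intro m
    induction m with
    | zero => simp
    | succ m ih => rw [pow_succ, ← mul_assoc, ih, hSA]
  have hAkAi : A ^ k * Ai = 1 := by
    rw [hApow, hAidef, ← map_mul]
    have : a ^ k * a ^ (-(k : ℤ)) = 1 := by
      rw [← zpow_natCast, ← zpow_add, add_neg_cancel, zpow_zero]
    rw [this, map_one]
  have hAiAk : Ai * A ^ k = 1 := by
    rw [hApow, hAidef, ← map_mul]
    have : a ^ (-(k : ℤ)) * a ^ k = 1 := by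
      rw [← zpow_natCast, ← zpow_add, neg_add_cancel, zpow_zero]
    rw [this, map_one]
  have hSAi : ahat * Ai = ahat := by
    conv_lhs => rw [← hSAk k]
    rw [mul_assoc, hAkAi, mul_one]
  have hNA : ∀ m : ℕ, N * A ^ m = N := by
    intro m; rw [hNdef, mul_assoc ((A - 1) * B) ahat, hSAk]
  have hNAi : N * Ai = N := by
    rw [hNdef, mul_assoc ((A - 1) * B) ahat, hSAi]
  have hNN : N * N = 0 := by
    have h1 : N * N = (A - 1) * B * (ahat * (A - 1) * (B * ahat)) := by
      rw [hNdef]; noncomm_ring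
    rw [h1, hS2, zero_mul, mul_zero]
  refine ⟨?_, ?_, ?_⟩
  · have : (A ^ k + N) * (Ai - Ai * N)
        = A ^ k * Ai + N * Ai - (A ^ k * Ai * N + N * Ai * N) := by noncomm_ring
    rw [this, hAkAi, hNAi, hNN, one_mul]
    abel
  · have : (Ai - Ai * N) * (A ^ k + N)
        = Ai * A ^ k + Ai * N - (Ai * (N * A ^ k) + Ai * (N * N)) := by noncomm_ring
    rw [this, hAiAk, hNA k, hNN, mul_zero]
    abel
  · intro hgcd u hu
    haveI : NeZero n := ⟨by omega⟩
    have hSN : ahat * N = 0 := by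
      have h1 : ahat * N = ahat * (A - 1) * (B * ahat) := by rw [hNdef]; noncomm_ring
      rw [h1, hS2, zero_mul]
    -- powers of u
    have hupow : ∀ m : ℕ, ((u ^ m : (MonoidAlgebra 𝕂 G)ˣ) : MonoidAlgebra 𝕂 G)
        = A ^ (k * m) + (∑ j ∈ Finset.range m, A ^ (k * j)) * N := by
      intro m
      induction m with
      | zero => simp
      | succ m ih =>
        rw [pow_succ, Units.val_mul, ih, hu]
        have expand : (A ^ (k * m) + (∑ j ∈ Finset.range m, A ^ (k * j)) * N) * (A ^ k + N)
            = A ^ (k * m) * A ^ k + A ^ (k * m) * N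
              + ((∑ j ∈ Finset.range m, A ^ (k * j)) * (N * A ^ k)
                 + (∑ j ∈ Finset.range m, A ^ (k * j)) * (N * N)) := by noncomm_ring
        rw [expand, hNA k, hNN, mul_zero, add_zero, ← pow_add,
          Finset.sum_range_succ, add_mul, Nat.mul_succ]
        abel
    -- key reindexing: ∑_{j<n} A^{kj} = ahat
    have key : ∀ j : ℕ, A ^ ((j : ZMod n).val) = A ^ j := by
      intro j
      rw [ZMod.val_natCast, hApow, hApow, ← ha, pow_mod_orderOf]
    have step1 : ∀ c : ℕ, (∑ j ∈ Finset.range n, A ^ (c * j)) = ∑ x : ZMod n, A ^ (((c : ZMod n) * x).val) := by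
      intro c
      refine Finset.sum_nbij' (fun i => (i : ZMod n)) (fun x => x.val) ?_ ?_ ?_ ?_ ?_
      · intros; exact Finset.mem_univ _
      · intro x _; exact Finset.mem_range.mpr (ZMod.val_lt x)
      · intro i hi; exact ZMod.val_cast_of_lt (Finset.mem_range.mp hi)
      · intro x _; exact ZMod.natCast_zmod_val x
      · intro i _; rw [← Nat.cast_mul, key]
    have hTn : (∑ j ∈ Finset.range n, A ^ (k * j)) = ahat := by
      have step3 := step1 1
      simp only [Nat.cast_one, one_mul] at step3
      rw [hahat, step1 k, step3]
      rw [← Equiv.sum_comp (Units.mulLeft (ZMod.unitOfCoprime k hgcd)) (fun x => A ^ x.val)]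
      refine Finset.sum_congr rfl fun x _ => ?_
      simp [ZMod.coe_unitOfCoprime]
    have hun : u ^ n = 1 := by
      apply Units.ext
      rw [hupow n, hTn, hSN, add_zero, mul_comm k n, pow_mul, hAn, one_pow, Units.val_one]
    have hdvd : orderOf u ∣ n := orderOf_dvd_of_pow_eq_one hun
    set m := orderOf u with hm
    have hmn : m ≠ 0 := by
      intro h0
      rw [h0] at hdvd
      have := zero_dvd_iff.mp hdvd
      omega
    have hum : ((u ^ m : (MonoidAlgebra 𝕂 G)ˣ) : MonoidAlgebra 𝕂 G) = 1 := by
      rw [pow_orderOf_eq_one, Units.val_one]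
    have heq : (∑ j ∈ Finset.range m, A ^ (k * j)) * N = 1 - A ^ (k * m) := by
      have := hupow m
      rw [hum] at this
      rw [eq_sub_iff_add_eq, add_comm]
      exact this.symm
    -- support argument
    set P : Subgroup G := Subgroup.zpowers a with hP
    have hbP : b ∉ P := fun h => hb (Subgroup.le_normalizer h)
    have hpow_mem : ∀ i : ℕ, a ^ i ∈ P := fun i => Subgroup.pow_mem _ (Subgroup.mem_zpowers a) i
    have hsuppA : ∀ i : ℕ, ↑(A ^ i).coeff.support ⊆ (P : Set G) := by
      intro i g hg
      rw [hApow] at hg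
      have := Finsupp.support_single_subset hg
      rw [Finset.mem_singleton] at this
      rw [this]; exact hpow_mem i
    have hsuppS : ↑ahat.coeff.support ⊆ (P : Set G) := by
      rw [hahat]
      exact supp_sum_subset _ _ _ fun i _ => hsuppA i
    have hsuppT : ↑(∑ j ∈ Finset.range m, A ^ (k * j)).coeff.support ⊆ (P : Set G) :=
      supp_sum_subset _ _ _ fun j _ => hsuppA (k * j)
    have hsuppA1 : ↑(A - 1).coeff.support ⊆ (P : Set G) := by
      intro g hg
      have h1 := Finsupp.support_sub (f := A.coeff) (g := (1 : MonoidAlgebra 𝕂 G).coeff) hg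
      rcases Finset.mem_union.mp h1 with h2 | h2
      · have := Finsupp.support_single_subset h2
        rw [Finset.mem_singleton] at this
        rw [this]; exact Subgroup.mem_zpowers a
      · have : g ∈ (MonoidAlgebra.single (1 : G) (1 : 𝕂)).coeff.support := h2
        have := Finsupp.support_single_subset this
        rw [Finset.mem_singleton] at this
        rw [this]; exact Subgroup.one_mem _
    have hsuppB : ↑B.coeff.support ⊆ ({b} : Set G) := by
      intro g hg
      have := Finsupp.support_single_subset hg
      rw [Finset.mem_singleton] at this
      simp [this]
    have hnotP : ∀ g ∈ ((∑ j ∈ Finset.range m, A ^ (k * j)) * N).coeff.support, g ∉ (P : Set G) := by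
      intro g hg hgP
      have h1 := MonoidAlgebra.support_coeff_mul_subset _ _ hg
      rw [Finset.mem_mul] at h1
      obtain ⟨p, hp, x, hx, hpx⟩ := h1
      have hpP : p ∈ P := hsuppT hp
      have h2 := MonoidAlgebra.support_coeff_mul_subset ((A - 1) * B) ahat hx
      rw [Finset.mem_mul] at h2
      obtain ⟨y, hy, r, hr, hyr⟩ := h2
      have hrP : r ∈ P := hsuppS hr
      have h3 := MonoidAlgebra.support_coeff_mul_subset (A - 1) B hy
      rw [Finset.mem_mul] at h3
      obtain ⟨q, hq, b', hb', hqb⟩ := h3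
      have hqP : q ∈ P := hsuppA1 hq
      have hbb : b' = b := hsuppB hb'
      -- g = p * (q * b * r) ∈ P ⟹ b ∈ P
      have : b = q⁻¹ * (p⁻¹ * g * r⁻¹) := by
        subst hpx; subst hyr; subst hqb; subst hbb; group
      apply hbP
      rw [this]
      exact Subgroup.mul_mem _ (Subgroup.inv_mem _ hqP)
        (Subgroup.mul_mem _ (Subgroup.mul_mem _ (Subgroup.inv_mem _ hpP) hgP) (Subgroup.inv_mem _ hrP))
    have hTN0 : (∑ j ∈ Finset.range m, A ^ (k * j)) * N = 0 := by
      by_contra h0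
      obtain ⟨g, hg⟩ := Finsupp.support_nonempty_iff.mpr (mt MonoidAlgebra.coeff_eq_zero.mp h0)
      apply hnotP g hg
      have hg2 : g ∈ (1 - A ^ (k * m) : MonoidAlgebra 𝕂 G).coeff.support := by rw [← heq]; exact hg
      have h1 := Finsupp.support_sub (f := (1 : MonoidAlgebra 𝕂 G).coeff) (g := (A ^ (k * m)).coeff) hg2
      rcases Finset.mem_union.mp h1 with h2 | h2
      · have : g ∈ (MonoidAlgebra.single (1 : G) (1 : 𝕂)).coeff.support := h2
        have := Finsupp.support_single_subset this
        rw [Finset.mem_singleton] at this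
        rw [this]; exact Subgroup.one_mem _
      · exact hsuppA (k * m) h2
    have hAkm : A ^ (k * m) = 1 := by
      rw [hTN0] at heq
      have := heq.symm
      rwa [sub_eq_zero, eq_comm] at this
    have hakm : a ^ (k * m) = 1 := by
      have h1 : MonoidAlgebra.of 𝕂 G (a ^ (k * m)) = MonoidAlgebra.of 𝕂 G 1 := by
        rw [← hApow, hAkm, map_one]
      exact MonoidAlgebra.of_injective h1
    have hndvd : n ∣ k * m := by
      rw [← ha]; exact orderOf_dvd_of_pow_eq_one hakm
    have hcop : Nat.Coprime n k := Nat.coprime_comm.mp hgcd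
    have : n ∣ m := hcop.dvd_of_dvd_mul_left hndvd
    exact Nat.dvd_antisymm hdvd this
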